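/- Let M be a randomized mechanism on 𝒳 and let ≈_ρ be the union of relations ≈_{ρ_1},…,≈_{ρ_N}. Let δ_i be the privacy profile of M with respect to ≈_{ρ_i} and f_i the optimal tradeoff function of M with respect to ≈_{ρ_i}, so that δ := max_i δ_i is the privacy profile of M with respect to ≈_ρ. Define f(α) = sup_{ε∈ℝ} e^{−ε}(1 − δ(ε) − α). If there exists a pair X ≈_ρ X' such that δ(ε) = D^HS_{e^ε}(M(X)‖M(X')) for every ε ∈ ℝ, then min_{1≤i≤N} f_i(α) = f(α) for all α ∈ [0,1]. -/

import Mathlib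

open MeasureTheory Real Set

noncomputable section

/-- Hockey-stick divergence of order `a > 0`:
`D^HS_a(P‖Q) = sup_A (P(A) − a·Q(A))` over measurable sets `A`. -/
def hsDiv {Z : Type*} [MeasurableSpace Z] (a : ℝ) (P Q : Measure Z) : ℝ :=
  sSup {x : ℝ | ∃ A : Set Z, MeasurableSet A ∧ x = (P A).toReal - a * (Q A).toReal}

/-- The privacy profile of a mechanism `M` with respect to a neighboring relation `rel`:
`δ(ε) = sup_{X ≈ X'} D^HS_{e^ε}(M(X)‖M(X'))`. -/
def privacyProfile {𝒳 Z : Type*} [MeasurableSpace Z] (M : 𝒳 → Measure Z)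
    (rel : 𝒳 → 𝒳 → Prop) (ε : ℝ) : ℝ :=
  sSup {x : ℝ | ∃ X X' : 𝒳, rel X X' ∧ x = hsDiv (exp ε) (M X) (M X')}

/-- Tradeoff function `Λ(P‖Q)(α)`: the least type-II error
`E_Q[1 − φ]` over measurable tests `φ : Z → [0,1]` with `E_P[φ] = α`. -/
def tradeoff {Z : Type*} [MeasurableSpace Z] (P Q : Measure Z) (α : ℝ) : ℝ :=
  sInf {x : ℝ | ∃ φ : Z → ℝ, Measurable φ ∧ (∀ z, φ z ∈ Icc (0 : ℝ) 1) ∧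
    (∫ z, φ z ∂P) = α ∧ x = ∫ z, (1 - φ z) ∂Q}

/-- `M` satisfies `f`-differential privacy with respect to `rel`. -/
def fDP {𝒳 Z : Type*} [MeasurableSpace Z] (M : 𝒳 → Measure Z)
    (rel : 𝒳 → 𝒳 → Prop) (f : ℝ → ℝ) : Prop :=
  ∀ X X' : 𝒳, rel X X' → ∀ α ∈ Icc (0 : ℝ) 1, f α ≤ tradeoff (M X) (M X') α

/-- A tradeoff function: convex, continuous, non-increasing `[0,1] → [0,1]`
with `f α ≤ 1 − α`. -/
def IsTradeoffFun (f : ℝ → ℝ) : Prop :=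
  ConvexOn ℝ (Icc 0 1) f ∧ ContinuousOn f (Icc 0 1) ∧ AntitoneOn f (Icc 0 1) ∧
    ∀ α ∈ Icc (0 : ℝ) 1, f α ∈ Icc (0 : ℝ) 1 ∧ f α ≤ 1 - α

/-- `f` is the optimal tradeoff function of `M` with respect to `rel`. -/
def IsOptimalTradeoff {𝒳 Z : Type*} [MeasurableSpace Z] (M : 𝒳 → Measure Z)
    (rel : 𝒳 → 𝒳 → Prop) (f : ℝ → ℝ) : Prop :=
  IsTradeoffFun f ∧ fDP M rel f ∧
    ∀ g : ℝ → ℝ, IsTradeoffFun g → fDP M rel g → ∀ α ∈ Icc (0 : ℝ) 1, g α ≤ f α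

/-- Left-continuous inverse of a non-increasing function on `[0,1]`. -/
def leftInv (g : ℝ → ℝ) (α : ℝ) : ℝ :=
  sInf {t : ℝ | t ∈ Icc (0 : ℝ) 1 ∧ g t ≤ α}

/-- Convex conjugate of the `+∞`-extension to `ℝ` of a real-valued function on `[0,1]`:
`h*(s) = sup_{x ∈ [0,1]} (s·x − h(x))`. -/
def conjOn01 (h : ℝ → ℝ) (s : ℝ) : ℝ :=
  sSup {y : ℝ | ∃ x ∈ Icc (0 : ℝ) 1, y = s * x - h x}

section Aux

variable {Z : Type*} [MeasurableSpace Z] {P Q : Measure Z}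

lemma measure_toReal_le_one [IsProbabilityMeasure P] (A : Set Z) : (P A).toReal ≤ 1 := by
  have h := measure_mono (subset_univ A) (μ := P)
  rw [measure_univ] at h
  simpa using ENNReal.toReal_mono ENNReal.one_ne_top h

lemma hsDiv_elt_le_one [IsProbabilityMeasure P] {a : ℝ} (ha : 0 < a) :
    ∀ x ∈ {x : ℝ | ∃ A : Set Z, MeasurableSet A ∧ x = (P A).toReal - a * (Q A).toReal},
      x ≤ 1 := by
  rintro x ⟨A, hA, rfl⟩
  have h1 : (P A).toReal ≤ 1 := measure_toReal_le_one A
  have h2 : 0 ≤ a * (Q A).toReal := by positivity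
  linarith

lemma le_hsDiv [IsProbabilityMeasure P] {a : ℝ} (ha : 0 < a) {A : Set Z}
    (hA : MeasurableSet A) : (P A).toReal - a * (Q A).toReal ≤ hsDiv a P Q :=
  le_csSup ⟨1, hsDiv_elt_le_one ha⟩ ⟨A, hA, rfl⟩

lemma hsDiv_le [IsProbabilityMeasure P] {a c : ℝ} (ha : 0 < a)
    (h : ∀ A : Set Z, MeasurableSet A → (P A).toReal - a * (Q A).toReal ≤ c) :
    hsDiv a P Q ≤ c := by
  refine csSup_le ⟨(P ∅).toReal - a * (Q ∅).toReal, ∅, MeasurableSet.empty, rfl⟩ ?_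
  rintro x ⟨A, hA, rfl⟩
  exact h A hA

lemma hsDiv_le_one [IsProbabilityMeasure P] {a : ℝ} (ha : 0 < a) : hsDiv a P Q ≤ 1 :=
  csSup_le ⟨(P ∅).toReal - a * (Q ∅).toReal, ∅, MeasurableSet.empty, rfl⟩ (hsDiv_elt_le_one ha)

lemma one_sub_le_hsDiv [IsProbabilityMeasure P] [IsProbabilityMeasure Q] {a : ℝ}
    (ha : 0 < a) : 1 - a ≤ hsDiv a P Q := by
  have := le_hsDiv (P := P) (Q := Q) ha MeasurableSet.univ
  simpa using this

lemma hsDiv_nonneg [IsProbabilityMeasure P] {a : ℝ} (ha : 0 < a) : 0 ≤ hsDiv a P Q := by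
  have := le_hsDiv (P := P) (Q := Q) ha MeasurableSet.empty
  simpa using this

/-- Neyman–Pearson: the "test" functional is dominated by the set-based hockey stick. -/
lemma np_le_hsDiv [IsProbabilityMeasure P] [IsProbabilityMeasure Q] {a : ℝ} (ha : 0 < a)
    {ψ : Z → ℝ} (hm : Measurable ψ) (h01 : ∀ z, ψ z ∈ Icc (0 : ℝ) 1) :
    (∫ z, ψ z ∂P) - a * ∫ z, ψ z ∂Q ≤ hsDiv a P Q := by
  set ν : Measure Z := P + Q with hν
  have hPν : P ≪ ν := Measure.absolutelyContinuous_of_le (Measure.le_add_right le_rfl)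
  have hQν : Q ≪ ν := Measure.absolutelyContinuous_of_le (Measure.le_add_left le_rfl)
  set p : Z → ℝ := fun z => (P.rnDeriv ν z).toReal with hp
  set q : Z → ℝ := fun z => (Q.rnDeriv ν z).toReal with hq
  have hpm : Measurable p := (Measure.measurable_rnDeriv P ν).ennreal_toReal
  have hqm : Measurable q := (Measure.measurable_rnDeriv Q ν).ennreal_toReal
  have hpint : Integrable p ν := Measure.integrable_toReal_rnDeriv
  have hqint : Integrable q ν := Measure.integrable_toReal_rnDeriv
  set d : Z → ℝ := fun z => p z - a * q z with hd
  have hdint : Integrable d ν := hpint.sub (hqint.const_mul a)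
  have hψnorm : ∀ z, ‖ψ z‖ ≤ 1 := by
    intro z
    rw [Real.norm_eq_abs, abs_le]
    exact ⟨by linarith [(h01 z).1], (h01 z).2⟩
  have hψdint : Integrable (fun z => ψ z * d z) ν :=
    hdint.bdd_mul hm.aestronglyMeasurable (Filter.Eventually.of_forall hψnorm)
  set A : Set Z := {z | a * q z ≤ p z} with hA
  have hAmeas : MeasurableSet A := measurableSet_le (hqm.const_mul a) hpm
  have hIP : ∫ z, ψ z * p z ∂ν = ∫ z, ψ z ∂P := by
    rw [← integral_rnDeriv_smul hPν (f := ψ)]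
    congr 1; ext z; simp [hp, smul_eq_mul]; ring
  have hIQ : ∫ z, ψ z * q z ∂ν = ∫ z, ψ z ∂Q := by
    rw [← integral_rnDeriv_smul hQν (f := ψ)]
    congr 1; ext z; simp [hq, smul_eq_mul]; ring
  have hψpint : Integrable (fun z => ψ z * p z) ν :=
    hpint.bdd_mul hm.aestronglyMeasurable (Filter.Eventually.of_forall hψnorm)
  have hψqint : Integrable (fun z => ψ z * q z) ν :=
    hqint.bdd_mul hm.aestronglyMeasurable (Filter.Eventually.of_forall hψnorm)
  have hsplit : (∫ z, ψ z ∂P) - a * ∫ z, ψ z ∂Q = ∫ z, ψ z * d z ∂ν := by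
    rw [← hIP, ← hIQ, ← integral_const_mul, ← integral_sub hψpint (hψqint.const_mul a)]
    congr 1; ext z; simp [hd]; ring
  have hpoint : ∀ z, ψ z * d z ≤ A.indicator d z := by
    intro z
    by_cases hz : z ∈ A
    · rw [indicator_of_mem hz]
      have hd0 : 0 ≤ d z := by simp only [hd]; simp only [hA, mem_setOf_eq] at hz; linarith
      nlinarith [(h01 z).1, (h01 z).2]
    · rw [indicator_of_notMem hz]
      have hd0 : d z ≤ 0 := by
        simp only [hA, mem_setOf_eq, not_le] at hz
        simp only [hd]; linarith
      nlinarith [(h01 z).1, (h01 z).2]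
  have hmono : ∫ z, ψ z * d z ∂ν ≤ ∫ z, A.indicator d z ∂ν :=
    integral_mono hψdint (hdint.indicator hAmeas) hpoint
  have hind : ∫ z, A.indicator d z ∂ν = (P A).toReal - a * (Q A).toReal := by
    rw [integral_indicator hAmeas]
    have : ∫ z in A, d z ∂ν = (∫ z in A, p z ∂ν) - a * ∫ z in A, q z ∂ν := by
      rw [← integral_const_mul, ← integral_sub hpint.integrableOn
        ((hqint.const_mul a).integrableOn)]
    rw [this, Measure.setIntegral_toReal_rnDeriv hPν A, Measure.setIntegral_toReal_rnDeriv hQν A,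
      measureReal_def, measureReal_def]
  calc (∫ z, ψ z ∂P) - a * ∫ z, ψ z ∂Q = ∫ z, ψ z * d z ∂ν := hsplit
    _ ≤ ∫ z, A.indicator d z ∂ν := hmono
    _ = (P A).toReal - a * (Q A).toReal := hind
    _ ≤ hsDiv a P Q := le_hsDiv ha hAmeas

end Aux

section Aux2

variable {Z : Type*} [MeasurableSpace Z] {P Q : Measure Z}

lemma tradeoff_bddBelow (α : ℝ) :
    ∀ x ∈ {x : ℝ | ∃ φ : Z → ℝ, Measurable φ ∧ (∀ z, φ z ∈ Icc (0 : ℝ) 1) ∧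
      (∫ z, φ z ∂P) = α ∧ x = ∫ z, (1 - φ z) ∂Q}, (0:ℝ) ≤ x := by
  rintro x ⟨φ, hφm, h01, hint, rfl⟩
  refine integral_nonneg fun z => ?_
  simp only [Pi.zero_apply]
  linarith [(h01 z).2]

lemma tradeoff_set_nonempty [IsProbabilityMeasure P] [IsProbabilityMeasure Q] {α : ℝ}
    (hα : α ∈ Icc (0:ℝ) 1) :
    Set.Nonempty {x : ℝ | ∃ φ : Z → ℝ, Measurable φ ∧ (∀ z, φ z ∈ Icc (0 : ℝ) 1) ∧
      (∫ z, φ z ∂P) = α ∧ x = ∫ z, (1 - φ z) ∂Q} := by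
  refine ⟨∫ z, (1 - (fun _ : Z => α) z) ∂Q, fun _ => α, measurable_const, fun z => hα, ?_, rfl⟩
  simp

lemma prob_compl_toReal [IsProbabilityMeasure P] {A : Set Z} (hA : MeasurableSet A) :
    (P Aᶜ).toReal = 1 - (P A).toReal := by
  rw [prob_compl_eq_one_sub hA, ENNReal.toReal_sub_of_le (prob_le_one) ENNReal.one_ne_top]
  simp

/-- The indicator test of `Aᶜ` shows `tradeoff P Q (P(Aᶜ)) ≤ Q(A)`. -/
lemma tradeoff_le_measure [IsProbabilityMeasure P] [IsProbabilityMeasure Q] {A : Set Z}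
    (hA : MeasurableSet A) : tradeoff P Q ((P Aᶜ).toReal) ≤ (Q A).toReal := by
  apply csInf_le ⟨0, tradeoff_bddBelow _⟩
  refine ⟨Aᶜ.indicator 1, measurable_one.indicator hA.compl, ?_, ?_, ?_⟩
  · intro z
    by_cases hz : z ∈ Aᶜ <;> simp [indicator_of_mem, indicator_of_notMem, hz]
  · exact integral_indicator_one hA.compl
  · have : ∀ z, (1:ℝ) - Aᶜ.indicator (1 : Z → ℝ) z = A.indicator (1 : Z → ℝ) z := by
      intro z
      by_cases hz : z ∈ A
      · rw [indicator_of_mem hz, indicator_of_notMem (by simpa using hz), Pi.one_apply]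
        norm_num
      · rw [indicator_of_notMem hz, indicator_of_mem (by simpa using hz), Pi.one_apply]
        norm_num
    rw [← measureReal_def, ← integral_indicator_one (μ := Q) hA]
    exact integral_congr_ae (Filter.Eventually.of_forall fun z => (this z).symm)

end Aux2

section Aux3

variable {δ : ℝ → ℝ}

lemma term_le_one (hge : ∀ ε, 1 - exp ε ≤ δ ε) {α : ℝ} (hα : 0 ≤ α) (ε : ℝ) :
    exp (-ε) * (1 - δ ε - α) ≤ 1 := by
  have h1 : 1 - δ ε - α ≤ exp ε := by linarith [hge ε]
  calc exp (-ε) * (1 - δ ε - α) ≤ exp (-ε) * exp ε :=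
        mul_le_mul_of_nonneg_left h1 (exp_pos _).le
    _ = 1 := by rw [← exp_add]; simp

lemma term_bddAbove (hge : ∀ ε, 1 - exp ε ≤ δ ε) {α : ℝ} (hα : 0 ≤ α) :
    BddAbove (Set.range fun ε => exp (-ε) * (1 - δ ε - α)) := by
  refine ⟨1, ?_⟩
  rintro x ⟨ε, rfl⟩
  exact term_le_one hge hα ε

lemma g_nonneg (hge : ∀ ε, 1 - exp ε ≤ δ ε) (hle : ∀ ε, δ ε ≤ 1) {α : ℝ}
    (hα : α ∈ Icc (0:ℝ) 1) : 0 ≤ ⨆ ε : ℝ, exp (-ε) * (1 - δ ε - α) := by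
  by_contra h
  push_neg at h
  set c := ⨆ ε : ℝ, exp (-ε) * (1 - δ ε - α) with hc
  set ε₀ := -Real.log (-c / 2) with hε₀
  have he : exp (-ε₀) = -c / 2 := by
    rw [hε₀, neg_neg, exp_log (by linarith)]
  have hterm : c / 2 ≤ exp (-ε₀) * (1 - δ ε₀ - α) := by
    have h1 : -(1:ℝ) ≤ 1 - δ ε₀ - α := by linarith [hle ε₀, hα.2]
    have := mul_le_mul_of_nonneg_left h1 (exp_pos (-ε₀)).le
    rw [he] at this ⊢
    linarith
  have hle2 : exp (-ε₀) * (1 - δ ε₀ - α) ≤ c := le_ciSup (term_bddAbove hge hα.1) ε₀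
  linarith

lemma g_le_one_sub (hge : ∀ ε, 1 - exp ε ≤ δ ε) (hge0 : ∀ ε, 0 ≤ δ ε) {α : ℝ}
    (hα : α ∈ Icc (0:ℝ) 1) : (⨆ ε : ℝ, exp (-ε) * (1 - δ ε - α)) ≤ 1 - α := by
  apply ciSup_le
  intro ε
  rcases le_or_gt 0 ε with hε | hε
  · have h1 : 1 - δ ε - α ≤ 1 - α := by linarith [hge0 ε]
    have h2 : exp (-ε) ≤ 1 := exp_le_one_iff.mpr (by linarith)
    have h3 : exp (-ε) * (1 - δ ε - α) ≤ exp (-ε) * (1 - α) :=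
      mul_le_mul_of_nonneg_left h1 (exp_pos _).le
    nlinarith [exp_pos (-ε), hα.2]
  · have h1 : 1 - δ ε - α ≤ exp ε - α := by linarith [hge ε]
    have h2 : exp (-ε) * (1 - δ ε - α) ≤ exp (-ε) * (exp ε - α) :=
      mul_le_mul_of_nonneg_left h1 (exp_pos _).le
    have h3 : exp (-ε) * exp ε = 1 := by rw [← exp_add]; simp
    have h4 : (1:ℝ) ≤ exp (-ε) := one_le_exp (by linarith)
    nlinarith [hα.1]

lemma g_antitoneOn (hge : ∀ ε, 1 - exp ε ≤ δ ε) :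
    AntitoneOn (fun α => ⨆ ε : ℝ, exp (-ε) * (1 - δ ε - α)) (Icc (0:ℝ) 1) := by
  intro x hx y hy hxy
  apply ciSup_le
  intro ε
  refine le_ciSup_of_le (term_bddAbove hge hx.1) ε ?_
  exact mul_le_mul_of_nonneg_left (by linarith) (exp_pos _).le

lemma g_convexOn (hge : ∀ ε, 1 - exp ε ≤ δ ε) :
    ConvexOn ℝ (Icc (0:ℝ) 1) (fun α => ⨆ ε : ℝ, exp (-ε) * (1 - δ ε - α)) := by
  refine ⟨convex_Icc 0 1, fun x hx y hy a b ha hb hab => ?_⟩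
  simp only [smul_eq_mul]
  apply ciSup_le
  intro ε
  have hkey : exp (-ε) * (1 - δ ε - (a * x + b * y)) =
      a * (exp (-ε) * (1 - δ ε - x)) + b * (exp (-ε) * (1 - δ ε - y)) := by
    linear_combination (exp (-ε) * (1 - δ ε)) * hab.symm
  rw [hkey]
  exact add_le_add
    (mul_le_mul_of_nonneg_left (le_ciSup (term_bddAbove hge hx.1) ε) ha)
    (mul_le_mul_of_nonneg_left (le_ciSup (term_bddAbove hge hy.1) ε) hb)

lemma g_lip (hge : ∀ ε, 1 - exp ε ≤ δ ε) (hle : ∀ ε, δ ε ≤ 1) {α β : ℝ}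
    (hα : 0 < α) (hαβ : α ≤ β) (hβ : β ≤ 1) :
    (⨆ ε : ℝ, exp (-ε) * (1 - δ ε - α)) ≤
      (⨆ ε : ℝ, exp (-ε) * (1 - δ ε - β)) + (2 / α) * (β - α) := by
  have hβmem : β ∈ Icc (0:ℝ) 1 := ⟨by linarith, hβ⟩
  have hgβ : 0 ≤ ⨆ ε : ℝ, exp (-ε) * (1 - δ ε - β) := g_nonneg hge hle hβmem
  apply ciSup_le
  intro ε
  rcases le_or_gt (exp (-ε)) (2 / α) with hK | hK
  · have h1 : exp (-ε) * (1 - δ ε - α) =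
        exp (-ε) * (1 - δ ε - β) + exp (-ε) * (β - α) := by ring
    have h2 : exp (-ε) * (1 - δ ε - β) ≤ ⨆ ε : ℝ, exp (-ε) * (1 - δ ε - β) :=
      le_ciSup (term_bddAbove hge hβmem.1) ε
    have h3 : exp (-ε) * (β - α) ≤ (2 / α) * (β - α) :=
      mul_le_mul_of_nonneg_right hK (by linarith)
    linarith
  · have h1 : 1 - δ ε - α ≤ exp ε - α := by linarith [hge ε]
    have h2 : exp (-ε) * (1 - δ ε - α) ≤ exp (-ε) * (exp ε - α) :=
      mul_le_mul_of_nonneg_left h1 (exp_pos _).le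
    have h3 : exp (-ε) * exp ε = 1 := by rw [← exp_add]; simp
    have h4 : (2/α) * α ≤ exp (-ε) * α := by
      exact mul_le_mul_of_nonneg_right hK.le hα.le
    have h5 : (2/α) * α = 2 := by field_simp
    have h6 : (2/α) * (β - α) ≥ 0 := by
      apply mul_nonneg (by positivity) (by linarith)
    nlinarith
  
lemma g_continuousOn (hge : ∀ ε, 1 - exp ε ≤ δ ε) (hle : ∀ ε, δ ε ≤ 1) :
    ContinuousOn (fun α => ⨆ ε : ℝ, exp (-ε) * (1 - δ ε - α)) (Icc (0:ℝ) 1) := by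
  set g : ℝ → ℝ := fun α => ⨆ ε : ℝ, exp (-ε) * (1 - δ ε - α) with hg
  have hant : AntitoneOn g (Icc (0:ℝ) 1) := g_antitoneOn hge
  intro a ha
  rw [Metric.continuousWithinAt_iff]
  intro c' hc'
  -- pick ε* nearly attaining g a
  have hlt : g a - c' / 2 < g a := by linarith
  have hlt' : g a - c' / 2 < ⨆ ε : ℝ, exp (-ε) * (1 - δ ε - a) := hlt
  obtain ⟨ε₁, hε₁⟩ := exists_lt_of_lt_ciSup hlt'
  set K := exp (-ε₁) with hK
  have hKpos : 0 < K := exp_pos _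
  -- right-side estimate : for x ≥ a in Icc, g a - g x ≤ c'/2 + K * (x - a)
  have hright : ∀ x ∈ Icc (0:ℝ) 1, a ≤ x → g a - g x ≤ c' / 2 + K * (x - a) := by
    intro x hx hax
    have h1 : exp (-ε₁) * (1 - δ ε₁ - x) ≤ g x := le_ciSup (term_bddAbove hge hx.1) ε₁
    have h2 : exp (-ε₁) * (1 - δ ε₁ - x) = exp (-ε₁) * (1 - δ ε₁ - a) - K * (x - a) := by
      rw [hK]; ring
    have h3 : g a - c' / 2 < exp (-ε₁) * (1 - δ ε₁ - a) := hε₁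
    linarith
  rcases eq_or_lt_of_le ha.1 with ha0 | ha0
  · -- a = 0 : only right side matters
    refine ⟨c' / (2 * K), by positivity, ?_⟩
    intro x hx hdist
    have hax : a ≤ x := ha0 ▸ hx.1
    have h1 : g x ≤ g a := hant ha hx hax
    have h2 : g a - g x ≤ c' / 2 + K * (x - a) := hright x hx hax
    rw [Real.dist_eq] at hdist ⊢
    have hxa : |x - a| = x - a := abs_of_nonneg (by linarith)
    rw [hxa] at hdist
    have : K * (x - a) < K * (c' / (2 * K)) := by
      exact mul_lt_mul_of_pos_left hdist hKpos
    have hKc : K * (c' / (2 * K)) = c' / 2 := by field_simp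
    rw [abs_lt]
    constructor <;> nlinarith
  · -- a > 0
    refine ⟨min (c' / (2 * K)) (min (a / 2) (c' * a / 8)), by positivity, ?_⟩
    intro x hx hdist
    rw [Real.dist_eq] at hdist
    rw [Real.dist_eq, abs_lt]
    rcases le_or_gt a x with hax | hax
    · have h1 : g x ≤ g a := hant ha hx hax
      have h2 : g a - g x ≤ c' / 2 + K * (x - a) := hright x hx hax
      have hxa : |x - a| = x - a := abs_of_nonneg (by linarith)
      have hd1 : x - a < c' / (2 * K) := by
        rw [hxa] at hdist
        exact lt_of_lt_of_le hdist (min_le_left _ _)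
      have : K * (x - a) < K * (c' / (2 * K)) := mul_lt_mul_of_pos_left hd1 hKpos
      have hKc : K * (c' / (2 * K)) = c' / 2 := by field_simp
      constructor <;> nlinarith
    · -- x < a : left side, use Lipschitz estimate
      have hxa : |x - a| = a - x := by rw [abs_of_nonpos (by linarith)]; ring
      rw [hxa] at hdist
      have hd2 : a - x < a / 2 := lt_of_lt_of_le hdist ((min_le_right _ _).trans (min_le_left _ _))
      have hd3 : a - x < c' * a / 8 := lt_of_lt_of_le hdist ((min_le_right _ _).trans (min_le_right _ _))
      have hx0 : a / 2 < x := by linarith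
      have hxpos : 0 < x := by linarith
      have h1 : g x ≤ g a + (2 / x) * (a - x) := g_lip hge hle hxpos hax.le ha.2
      have h2 : g a ≤ g x := hant hx ha hax.le
      have h3 : (2 / x) * (a - x) ≤ (4 / a) * (a - x) := by
        apply mul_le_mul_of_nonneg_right _ (by linarith)
        rw [div_le_div_iff₀ hxpos ha0]
        linarith
      have h4 : (4 / a) * (a - x) < (4 / a) * (c' * a / 8) := by
        apply mul_lt_mul_of_pos_left hd3 (by positivity)
      have h5 : (4 / a) * (c' * a / 8) = c' / 2 := by field_simp; ring
      constructor <;> nlinarith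

/-- Supporting line lemma for a convex continuous antitone function on `[0,1]`. -/
lemma supporting_line {f : ℝ → ℝ} (hconv : ConvexOn ℝ (Icc 0 1) f)
    (hcont : ContinuousOn f (Icc 0 1)) (hant : AntitoneOn f (Icc 0 1))
    (hf0 : ∀ x ∈ Icc (0:ℝ) 1, 0 ≤ f x) (hf1 : ∀ x ∈ Icc (0:ℝ) 1, f x ≤ 1)
    {α c : ℝ} (hα : α ∈ Icc (0:ℝ) 1) (hc : c < f α) :
    ∃ s : ℝ, 0 < s ∧ ∀ β ∈ Icc (0:ℝ) 1, c - s * (β - α) ≤ f β := by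
  have hc1 : c < 1 := lt_of_lt_of_le hc (hf1 α hα)
  rcases eq_or_lt_of_le hα.1 with hα0 | hα0
  · -- α = 0
    have hcw : ContinuousWithinAt f (Icc (0:ℝ) 1) α := hcont α hα
    rw [Metric.continuousWithinAt_iff] at hcw
    obtain ⟨κ, hκpos, hκ⟩ := hcw (f α - c) (by linarith)
    refine ⟨2 / κ + 1, by positivity, ?_⟩
    intro β hβ
    rcases lt_or_ge β κ with hβκ | hβκ
    · have hdist : dist β α < κ := by
        rw [Real.dist_eq, ← hα0, sub_zero, abs_of_nonneg hβ.1]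
        exact hβκ
      have := hκ hβ hdist
      rw [Real.dist_eq, abs_lt] at this
      have hs : 0 ≤ (2 / κ + 1) * (β - α) := by
        apply mul_nonneg (by positivity)
        rw [← hα0]; linarith [hβ.1]
      linarith
    · have h1 : (2 / κ + 1) * (β - α) ≥ (2 / κ) * κ := by
        rw [← hα0, sub_zero]
        have : (2 / κ) * κ ≤ (2 / κ) * β := by
          apply mul_le_mul_of_nonneg_left hβκ (by positivity)
        nlinarith [hβ.1]
      have h2 : (2 / κ) * κ = 2 := by field_simp
      have := hf0 β hβ
      linarith
  · -- α > 0
    set S : Set ℝ := {σ : ℝ | ∃ β, (0 ≤ β ∧ β < α) ∧ σ = (f α - f β) / (α - β)} with hS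
    have hne : S.Nonempty := ⟨(f α - f 0) / (α - 0), 0, ⟨le_refl 0, hα0⟩, rfl⟩
    have hub : ∀ σ ∈ S, σ ≤ 0 := by
      rintro σ ⟨β, ⟨hβ0, hβα⟩, rfl⟩
      have hβmem : β ∈ Icc (0:ℝ) 1 := ⟨hβ0, by linarith [hα.2]⟩
      have : f α ≤ f β := hant hβmem hα hβα.le
      apply div_nonpos_of_nonpos_of_nonneg <;> linarith
    have hbdd : BddAbove S := ⟨0, hub⟩
    set m := sSup S with hm
    have hm0 : m ≤ 0 := csSup_le hne hub
    have claim_left : ∀ β, 0 ≤ β → β < α → f α + m * (β - α) ≤ f β := by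
      intro β hβ0 hβα
      have hmem : (f α - f β) / (α - β) ∈ S := ⟨β, ⟨hβ0, hβα⟩, rfl⟩
      have h1 : (f α - f β) / (α - β) ≤ m := le_csSup hbdd hmem
      rw [div_le_iff₀ (by linarith)] at h1
      nlinarith
    have claim_right : ∀ γ, α < γ → γ ≤ 1 → f α + m * (γ - α) ≤ f γ := by
      intro γ hαγ hγ1
      have h1 : m ≤ (f γ - f α) / (γ - α) := by
        apply csSup_le hne
        rintro σ ⟨β, ⟨hβ0, hβα⟩, rfl⟩
        have hβmem : β ∈ Icc (0:ℝ) 1 := ⟨hβ0, by linarith [hα.2]⟩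
        have hγmem : γ ∈ Icc (0:ℝ) 1 := ⟨by linarith, hγ1⟩
        have hsl := hconv.slope_mono_adjacent hβmem hγmem hβα hαγ
        exact hsl
      rw [le_div_iff₀ (by linarith)] at h1
      nlinarith
    rcases lt_or_eq_of_le hm0 with hmneg | hmzero
    · refine ⟨-m, by linarith, ?_⟩
      intro β hβ
      rcases lt_trichotomy β α with h | h | h
      · have := claim_left β hβ.1 h
        nlinarith
      · rw [h]
        simp only [sub_self, mul_zero, sub_zero]
        linarith
      · have := claim_right β h hβ.2
        nlinarith
    · -- m = 0 : f α is a global minimum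
      have hmin : ∀ β ∈ Icc (0:ℝ) 1, f α ≤ f β := by
        intro β hβ
        rcases lt_trichotomy β α with h | h | h
        · have := claim_left β hβ.1 h; rw [hmzero] at this; linarith
        · rw [h]
        · have := claim_right β h hβ.2; rw [hmzero] at this; linarith
      refine ⟨f α - c, by linarith, ?_⟩
      intro β hβ
      have h1 : f α ≤ f β := hmin β hβ
      have h2 : β - α ≥ -1 := by linarith [hβ.1, hα.2]
      nlinarith

end Aux3

/-- tightness: let `≈_ρ` be the union of relations `≈_{ρ_1},…,≈_{ρ_N}`,
`δ_i` the privacy profile and `f_i` the optimal tradeoff function of `M` for `≈_{ρ_i}`,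
and `δ = max_i δ_i` the privacy profile for `≈_ρ`. If some pair `X ≈_ρ X'` attains
`δ(ε) = D^HS_{e^ε}(M(X)‖M(X'))` for every `ε`, then
`min_i f_i(α) = sup_ε e^{−ε}(1 − δ(ε) − α)` for all `α ∈ [0,1]`. -/
theorem min_optimalTradeoff_eq_dual
    {𝒳 Z : Type*} [MeasurableSpace Z] (M : 𝒳 → Measure Z)
    (hM : ∀ X, IsProbabilityMeasure (M X))
    (N : ℕ) (hN : 0 < N)
    (relρ : 𝒳 → 𝒳 → Prop) (rels : Fin N → 𝒳 → 𝒳 → Prop)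
    (hdecomp : ∀ X X', relρ X X' ↔ ∃ i, rels i X X')
    (δi : Fin N → ℝ → ℝ) (hδi : ∀ i ε, δi i ε = privacyProfile M (rels i) ε)
    (fi : Fin N → ℝ → ℝ) (hfi : ∀ i, IsOptimalTradeoff M (rels i) (fi i))
    (δ : ℝ → ℝ) (hδ : ∀ ε, δ ε = sSup (Set.range fun i => δi i ε))
    (htight : ∃ X X', relρ X X' ∧ ∀ ε : ℝ, δ ε = hsDiv (exp ε) (M X) (M X')) :
    ∀ α ∈ Icc (0 : ℝ) 1,
      sInf (Set.range fun i => fi i α) = ⨆ ε : ℝ, exp (-ε) * (1 - δ ε - α) := by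
  have hNE : Nonempty (Fin N) := ⟨⟨0, hN⟩⟩
  obtain ⟨X₀, X₀', hrel₀, htv⟩ := htight
  obtain ⟨j, hj⟩ := (hdecomp X₀ X₀').mp hrel₀
  haveI := hM X₀
  haveI := hM X₀'
  have hδ_le1 : ∀ ε, δ ε ≤ 1 := fun ε => by
    rw [htv ε]; exact hsDiv_le_one (exp_pos ε)
  have hδ_ge : ∀ ε, 1 - exp ε ≤ δ ε := fun ε => by
    rw [htv ε]; exact one_sub_le_hsDiv (exp_pos ε)
  have hδ_ge0 : ∀ ε, 0 ≤ δ ε := fun ε => by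
    rw [htv ε]; exact hsDiv_nonneg (exp_pos ε)
  set g : ℝ → ℝ := fun α => ⨆ ε : ℝ, exp (-ε) * (1 - δ ε - α) with hgdef
  have htf : IsTradeoffFun g := by
    refine ⟨g_convexOn hδ_ge, g_continuousOn hδ_ge hδ_le1, g_antitoneOn hδ_ge, fun α hα => ?_⟩
    have h1 : 0 ≤ g α := g_nonneg hδ_ge hδ_le1 hα
    have h2 : g α ≤ 1 - α := g_le_one_sub hδ_ge hδ_ge0 hα
    exact ⟨⟨h1, by linarith [hα.1]⟩, h2⟩
  have hfDPg : ∀ i, fDP M (rels i) g := by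
    intro i X X' hrel α hα
    haveI := hM X
    haveI := hM X'
    unfold tradeoff
    apply le_csInf (tradeoff_set_nonempty hα)
    rintro x ⟨φ, hφm, h01, hφint, rfl⟩
    have hφnorm : ∀ z, ‖φ z‖ ≤ 1 := by
      intro z
      rw [Real.norm_eq_abs, abs_le]
      exact ⟨by linarith [(h01 z).1], (h01 z).2⟩
    have hφint' : Integrable φ (M X) :=
      Integrable.mono' (integrable_const 1) hφm.aestronglyMeasurable
        (Filter.Eventually.of_forall hφnorm)
    have hψm : Measurable (fun z => 1 - φ z) := measurable_const.sub hφm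
    have hψ01 : ∀ z, (fun z => 1 - φ z) z ∈ Icc (0:ℝ) 1 := by
      intro z
      refine ⟨?_, ?_⟩
      · show (0:ℝ) ≤ 1 - φ z
        linarith [(h01 z).2]
      · show (1:ℝ) - φ z ≤ 1
        linarith [(h01 z).1]
    have hψP : ∫ z, (1 - φ z) ∂(M X) = 1 - α := by
      rw [integral_sub (integrable_const 1) hφint', hφint]
      simp
    show g α ≤ ∫ z, (1 - φ z) ∂(M X')
    set x := ∫ z, (1 - φ z) ∂(M X') with hxdef
    rw [hgdef]
    apply ciSup_le
    intro ε
    have hnp : (1 - α) - exp ε * ∫ z, (1 - φ z) ∂(M X') ≤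
        hsDiv (exp ε) (M X) (M X') := by
      rw [← hψP]
      exact np_le_hsDiv (exp_pos ε) hψm hψ01
    have h1 : hsDiv (exp ε) (M X) (M X') ≤ δi i ε := by
      rw [hδi]
      unfold privacyProfile
      refine le_csSup ⟨1, ?_⟩ ⟨X, X', hrel, rfl⟩
      rintro y ⟨Y, Y', hr, rfl⟩
      haveI := hM Y
      exact hsDiv_le_one (exp_pos ε)
    have h2 : δi i ε ≤ δ ε := by
      rw [hδ]
      exact le_csSup ((Set.finite_range _).bddAbove) ⟨i, rfl⟩
    have key : 1 - α - exp ε * ∫ z, (1 - φ z) ∂(M X') ≤ δ ε := by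
      linarith
    have hee : exp (-ε) * exp ε = 1 := by rw [← exp_add]; simp
    have hexp := exp_pos (-ε)
    have k2 : 1 - δ ε - α ≤ exp ε * x := by linarith
    have k3 := mul_le_mul_of_nonneg_left k2 hexp.le
    have k4 : exp (-ε) * (exp ε * x) = x := by
      rw [← mul_assoc, hee, one_mul]
    linarith
  have hgle : ∀ i, ∀ α' ∈ Icc (0:ℝ) 1, g α' ≤ fi i α' :=
    fun i => (hfi i).2.2 g htf (hfDPg i)
  intro α hα
  have hgoal : (⨆ ε : ℝ, exp (-ε) * (1 - δ ε - α)) = g α := by rw [hgdef]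
  rw [hgoal]
  have hAle : fi j α ≤ g α := by
    by_contra hcon
    push_neg at hcon
    set c := (g α + fi j α) / 2 with hcdef
    have hc : c < fi j α := by rw [hcdef]; linarith
    have hcg : g α < c := by rw [hcdef]; linarith
    obtain ⟨htfj, hfDPj, _⟩ := hfi j
    obtain ⟨hconv, hcont, hant, hbounds⟩ := htfj
    obtain ⟨s, hs, hline⟩ := supporting_line hconv hcont hant
      (fun x hx => ((hbounds x hx).1).1) (fun x hx => ((hbounds x hx).1).2) hα hc
    set ε₀ := -Real.log s with hε₀
    have hes : exp (-ε₀) = s := by rw [hε₀, neg_neg, exp_log hs]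
    have heε : exp ε₀ = s⁻¹ := by rw [hε₀, exp_neg, exp_log hs]
    have hδb : δ ε₀ ≤ 1 - α - c * s⁻¹ := by
      rw [htv ε₀]
      apply hsDiv_le (exp_pos ε₀)
      intro A hA
      set β := ((M X₀) Aᶜ).toReal with hβ
      have hβmem : β ∈ Icc (0:ℝ) 1 := ⟨ENNReal.toReal_nonneg, measure_toReal_le_one _⟩
      have hPA : ((M X₀) A).toReal = 1 - β := by
        rw [hβ, prob_compl_toReal hA]; ring
      have hfβ : fi j β ≤ ((M X₀') A).toReal :=
        le_trans (hfDPj X₀ X₀' hj β hβmem) (tradeoff_le_measure hA)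
      have hlineβ : c - s * (β - α) ≤ ((M X₀') A).toReal :=
        le_trans (hline β hβmem) hfβ
      rw [hPA, heε]
      have hsi : (0:ℝ) < s⁻¹ := by positivity
      have h6 : s⁻¹ * (c - s * (β - α)) ≤ s⁻¹ * ((M X₀') A).toReal :=
        mul_le_mul_of_nonneg_left hlineβ hsi.le
      have h8 : s⁻¹ * s = 1 := inv_mul_cancel₀ (ne_of_gt hs)
      have h7 : c * s⁻¹ - (β - α) ≤ s⁻¹ * ((M X₀') A).toReal := by
        have he : s⁻¹ * (c - s * (β - α)) = c * s⁻¹ - (s⁻¹ * s) * (β - α) := by ring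
        rw [he, h8, one_mul] at h6
        exact h6
      linarith
    have hterm : c ≤ exp (-ε₀) * (1 - δ ε₀ - α) := by
      rw [hes]
      have h9 : c * s⁻¹ ≤ 1 - δ ε₀ - α := by linarith
      have h10 : s * (c * s⁻¹) ≤ s * (1 - δ ε₀ - α) :=
        mul_le_mul_of_nonneg_left h9 hs.le
      have h11 : s * (c * s⁻¹) = c := by field_simp
      linarith
    have hcle : c ≤ g α := by
      refine le_trans hterm ?_
      rw [hgdef]
      exact le_ciSup (term_bddAbove hδ_ge hα.1) ε₀
    linarith
  apply le_antisymm
  · exact le_trans (csInf_le ((Set.finite_range _).bddBelow) ⟨j, rfl⟩) hAle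
  · apply le_csInf (Set.range_nonempty _)
    rintro x ⟨i, rfl⟩
    exact hgle i α hα
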